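/- Let φ : [0,∞) → [0,∞) be an unbounded concave function with φ(0) = 0 and lim_{t→0+} φ(t) = 0. Then for all 0 ≤ x < y there exists a unique ω = ω(x,y) with x ≤ ω ≤ min{(x+y)/2, 2x} such that φ(x) − φ(y) + φ(y − ω) − φ(ω − x) = 0. Moreover, ω(x,y) = x for all 0 ≤ x ≤ y if and only if there exists λ > 0 such that φ(t) = λt for all t ≥ 0. -/

import Mathlib

/-- `d` is a metric on `X`: it vanishes exactly on the diagonal, is symmetric,
and satisfies the triangle inequality. -/
def IsMetricOn {X : Type*} (d : X → X → ℝ) : Prop :=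
  (∀ x y : X, d x y = 0 ↔ x = y) ∧ (∀ x y : X, d x y = d y x) ∧
    (∀ x y z : X, d x z ≤ d x y + d y z)

/-- `φ : [0,∞) → [0,∞)` is a metric transform: for every metric space `(X,d)`,
`φ ∘ d` is again a metric on `X`. -/
def IsMetricTransform (φ : ℝ → ℝ) : Prop :=
  ∀ (X : Type) (d : X → X → ℝ), IsMetricOn d → IsMetricOn (fun x y => φ (d x y))

/-- The Gromov product `(x|y)_w` for a distance function `d`. -/
noncomputable def gromovProd {X : Type*} (d : X → X → ℝ) (w x y : X) : ℝ :=
  (d x w + d y w - d x y) / 2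

/-- `d` is `δ`-hyperbolic: `(x|y)_w ≥ min{(x|z)_w, (y|z)_w} − δ` for all `x,y,z,w`. -/
def IsDeltaHyp {X : Type*} (d : X → X → ℝ) (δ : ℝ) : Prop :=
  ∀ w x y z : X, min (gromovProd d w x z) (gromovProd d w y z) - δ ≤ gromovProd d w x y

/-- `d` is Gromov hyperbolic: it is `δ`-hyperbolic for some `δ ≥ 0`. -/
def IsGromovHyp {X : Type*} (d : X → X → ℝ) : Prop :=
  ∃ δ : ℝ, 0 ≤ δ ∧ IsDeltaHyp d δ

/-- `φ` is approximately nondecreasing on `[0,∞)`: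
`η`-nondecreasing for some `η ≥ 0`. -/
def ApproxNondecreasing (φ : ℝ → ℝ) : Prop :=
  ∃ η : ℝ, 0 ≤ η ∧ ∀ t s : ℝ, 0 ≤ t → t ≤ s → φ t ≤ φ s + η

/-- `φ` is unbounded on `[0,∞)`. -/
def UnboundedOnNonneg (φ : ℝ → ℝ) : Prop :=
  ∀ M : ℝ, ∃ t : ℝ, 0 ≤ t ∧ M < φ t

/-- `φ` is a `(λ,k)`-approximate dilation for some `λ > 0`, `k ≥ 0`. -/
def ApproxDilation (φ : ℝ → ℝ) : Prop :=
  ∃ lam k : ℝ, 0 < lam ∧ 0 ≤ k ∧ ∀ t : ℝ, 0 ≤ t → |φ t - lam * t| ≤ k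

/-- `φ` is logarithm-like: `t ↦ φ(2t) − φ(t)` is bounded from above on `[0,∞)`. -/
def LogarithmLike (φ : ℝ → ℝ) : Prop :=
  ∃ C : ℝ, ∀ t : ℝ, 0 ≤ t → φ (2 * t) - φ t ≤ C

/-- The distance `|x − y|_φ = φ(|x − y|)` on the half line `[0,∞)`. -/
noncomputable def halfLineDist (φ : ℝ → ℝ) (x y : {t : ℝ // 0 ≤ t}) : ℝ :=
  φ |x.1 - y.1|

/-- `(X,d)` contains a `k`-rough geodesic ray for some `k ≥ 0`. -/
def HasRoughGeodesicRay (X : Type*) (d : X → X → ℝ) : Prop :=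
  ∃ k : ℝ, 0 ≤ k ∧ ∃ γ : ℝ → X, ∀ t s : ℝ, 0 ≤ t → 0 ≤ s →
    |t - s| - k ≤ d (γ t) (γ s) ∧ d (γ t) (γ s) ≤ |t - s| + k

/-- `d` is approximately ultrametric: `δ`-ultrametric for some `δ ≥ 0`. -/
def ApproxUltrametric {X : Type*} (d : X → X → ℝ) : Prop :=
  ∃ δ : ℝ, 0 ≤ δ ∧ ∀ x y z : X, d x y ≤ max (d x z) (d z y) + δ

/-- `d` is `k`-roughly geodesic: every pair of points is joined by a `k`-rough
geodesic segment. -/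
def RoughlyGeodesicK {X : Type*} (d : X → X → ℝ) (k : ℝ) : Prop :=
  ∀ x y : X, ∃ b : ℝ, 0 ≤ b ∧ ∃ γ : ℝ → X, γ 0 = x ∧ γ b = y ∧
    ∀ t s : ℝ, t ∈ Set.Icc 0 b → s ∈ Set.Icc 0 b →
      |t - s| - k ≤ d (γ t) (γ s) ∧ d (γ t) (γ s) ≤ |t - s| + k

/-- `d` has the `k`-rough midpoint property. -/
def RoughMidpointK {X : Type*} (d : X → X → ℝ) (k : ℝ) : Prop :=
  ∀ x y : X, ∃ z : X, max (d x z) (d y z) ≤ d x y / 2 + k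

/-- `(a,b,c)` is a triangle triplet. -/
def IsTriangleTriplet (a b c : ℝ) : Prop := a ≤ b + c ∧ b ≤ a + c ∧ c ≤ a + b

private lemma phi_chord (φ : ℝ → ℝ) (hconc : ConcaveOn ℝ (Set.Ici 0) φ) (h0 : φ 0 = 0)
    {s t : ℝ} (hs : 0 ≤ s) (hst : s ≤ t) (ht : 0 < t) : (s / t) * φ t ≤ φ s := by
  have ha : (0:ℝ) ≤ 1 - s / t := by
    have : s / t ≤ 1 := by rw [div_le_one ht]; exact hst
    linarith
  have hb : (0:ℝ) ≤ s / t := div_nonneg hs ht.le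
  have key := hconc.2 (Set.mem_Ici.2 le_rfl) (Set.mem_Ici.2 ht.le) ha hb (by ring)
  simp only [smul_eq_mul, mul_zero, zero_add, h0] at key
  rwa [div_mul_cancel₀ s ht.ne'] at key

private lemma phi_mono (φ : ℝ → ℝ)
    (hnonneg : ∀ t : ℝ, 0 ≤ t → 0 ≤ φ t)
    (hconc : ConcaveOn ℝ (Set.Ici 0) φ)
    {t s : ℝ} (ht : 0 ≤ t) (hts : t ≤ s) : φ t ≤ φ s := by
  rcases eq_or_lt_of_le hts with rfl | hlt
  · exact le_rfl
  by_contra hcon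
  push_neg at hcon
  set c : ℝ := (φ s - φ t) / (s - t) with hc
  have hcneg : c < 0 := div_neg_of_neg_of_pos (by linarith) (by linarith)
  set u : ℝ := s + (φ s + 1) / (-c) with hu
  have hsu : s < u := by
    have h' : 0 < (φ s + 1) / (-c) :=
      div_pos (by have := hnonneg s (ht.trans hts); linarith) (by linarith)
    rw [hu]; linarith
  have hslope := hconc.slope_anti_adjacent (Set.mem_Ici.2 ht)
    (Set.mem_Ici.2 (ht.trans (hlt.le.trans hsu.le))) hlt hsu
  rw [← hc] at hslope
  have h1 : φ u - φ s ≤ c * (u - s) := by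
    rw [div_le_iff₀ (by linarith)] at hslope
    linarith [hslope]
  have h2 : c * (u - s) = -(φ s + 1) := by
    have : u - s = (φ s + 1) / (-c) := by rw [hu]; ring
    rw [this]
    field_simp [ne_of_lt hcneg]
  have := hnonneg u (le_trans (ht.trans hlt.le) hsu.le)
  linarith

private lemma phi_strict (φ : ℝ → ℝ)
    (hnonneg : ∀ t : ℝ, 0 ≤ t → 0 ≤ φ t)
    (hconc : ConcaveOn ℝ (Set.Ici 0) φ)
    (hub : ∀ M : ℝ, ∃ t : ℝ, 0 ≤ t ∧ M < φ t)
    {a b : ℝ} (ha : 0 ≤ a) (hab : a < b) : φ a < φ b := by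
  rcases lt_or_eq_of_le (phi_mono φ hnonneg hconc ha hab.le) with h | h
  · exact h
  exfalso
  obtain ⟨u, hu0, hu⟩ := hub (φ b)
  rcases le_or_gt u b with hub' | hub'
  · exact absurd (phi_mono φ hnonneg hconc hu0 hub') (not_le.2 hu)
  · have hslope := hconc.slope_anti_adjacent (Set.mem_Ici.2 ha) (Set.mem_Ici.2 hu0) hab hub'
    rw [← h, sub_self, zero_div] at hslope
    have : φ u - φ b ≤ 0 := by
      have := (div_nonpos_iff.1 hslope)
      rcases this with ⟨h1, h2⟩ | ⟨h1, h2⟩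
      · linarith
      · nlinarith
    linarith

private lemma phi_subadd (φ : ℝ → ℝ) (hconc : ConcaveOn ℝ (Set.Ici 0) φ) (h0 : φ 0 = 0)
    {a b : ℝ} (ha : 0 ≤ a) (hb : 0 ≤ b) : φ (a + b) ≤ φ a + φ b := by
  rcases eq_or_lt_of_le (add_nonneg ha hb) with h | h
  · have ha0 : a = 0 := by linarith
    have hb0 : b = 0 := by linarith
    simp [ha0, hb0, h0]
  · have h1 := phi_chord φ hconc h0 ha (by linarith : a ≤ a + b) h
    have h2 := phi_chord φ hconc h0 hb (by linarith : b ≤ a + b) h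
    have : (a / (a + b)) * φ (a + b) + (b / (a + b)) * φ (a + b) = φ (a + b) := by
      field_simp
    linarith

private lemma phi_contOn (φ : ℝ → ℝ) (hconc : ConcaveOn ℝ (Set.Ici 0) φ) (h0 : φ 0 = 0)
    (hlim : Filter.Tendsto φ (nhdsWithin 0 (Set.Ioi 0)) (nhds 0)) :
    ContinuousOn φ (Set.Ici 0) := by
  have hIoi : ContinuousOn φ (Set.Ioi 0) :=
    (hconc.subset Set.Ioi_subset_Ici_self (convex_Ioi 0)).continuousOn isOpen_Ioi
  intro t ht
  rcases eq_or_lt_of_le (Set.mem_Ici.1 ht) with rfl | htpos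
  · unfold ContinuousWithinAt
    rw [h0, show Set.Ici (0:ℝ) = insert 0 (Set.Ioi 0) from Set.Ioi_insert.symm,
      nhdsWithin_insert, Filter.tendsto_sup]
    exact ⟨by simpa [h0] using tendsto_pure_nhds φ 0, hlim⟩
  · exact ((hIoi.continuousAt (isOpen_Ioi.mem_nhds htpos)).continuousWithinAt)

/-- Existence and uniqueness of the equalizing point `ω(x,y)`, and the
characterization of dilations. -/
theorem stmt_17 (φ : ℝ → ℝ)
    (hnonneg : ∀ t : ℝ, 0 ≤ t → 0 ≤ φ t)
    (hconc : ConcaveOn ℝ (Set.Ici 0) φ)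
    (h0 : φ 0 = 0)
    (hlim : Filter.Tendsto φ (nhdsWithin 0 (Set.Ioi 0)) (nhds 0))
    (hub : UnboundedOnNonneg φ) :
    (∀ x y : ℝ, 0 ≤ x → x < y →
      ∃! ω : ℝ, (x ≤ ω ∧ ω ≤ min ((x + y) / 2) (2 * x)) ∧
        φ x - φ y + φ (y - ω) - φ (ω - x) = 0) ∧
    ((∀ x y : ℝ, 0 ≤ x → x ≤ y → φ x - φ y + φ (y - x) - φ (x - x) = 0) ↔
      ∃ lam : ℝ, 0 < lam ∧ ∀ t : ℝ, 0 ≤ t → φ t = lam * t) := by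

  have hubM : ∀ M : ℝ, ∃ t : ℝ, 0 ≤ t ∧ M < φ t := hub
  constructor
  · intro x y hx hxy
    set m := min ((x + y) / 2) (2 * x) with hm
    have hxm : x ≤ m := le_min (by linarith) (by linarith)
    have hmy : m < y := lt_of_le_of_lt (min_le_left _ _) (by linarith)
    set F : ℝ → ℝ := fun ω => φ x - φ y + φ (y - ω) - φ (ω - x) with hF
    have hFcont : ContinuousOn F (Set.Icc x m) := by
      have hc := phi_contOn φ hconc h0 hlim
      have c1 : ContinuousOn (fun ω => φ (y - ω)) (Set.Icc x m) := by
        apply hc.comp ((continuous_const.sub continuous_id).continuousOn)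
        intro ω hω
        have := hω.2
        simp only [Set.mem_Ici, id_eq, Pi.sub_apply]
        linarith [hmy]
      have c2 : ContinuousOn (fun ω : ℝ => φ (ω - x)) (Set.Icc x m) := by
        apply hc.comp ((continuous_id.sub continuous_const).continuousOn)
        intro ω hω
        have := hω.1
        simp only [Set.mem_Ici, id_eq, Pi.sub_apply]
        linarith
      exact (continuousOn_const.add c1).sub c2
    have hanti : ∀ a b : ℝ, a ∈ Set.Icc x m → b ∈ Set.Icc x m → a < b → F b < F a := by
      intro a b ha hb hab
      have h1 : φ (y - b) < φ (y - a) :=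
        phi_strict φ hnonneg hconc hubM (by have := hb.2; linarith) (by linarith)
      have h2 : φ (a - x) ≤ φ (b - x) :=
        phi_mono φ hnonneg hconc (by have := ha.1; linarith) (by linarith)
      simp only [hF]
      linarith
    have hFx : 0 ≤ F x := by
      have hs := phi_subadd φ hconc h0 hx (by linarith : (0:ℝ) ≤ y - x)
      have he : x + (y - x) = y := by ring
      rw [he] at hs
      simp only [hF, sub_self, h0]
      linarith
    have hFm : F m ≤ 0 := by
      rcases min_cases ((x + y) / 2) (2 * x) with ⟨he, hle⟩ | ⟨he, hlt⟩
      · have e1 : y - m = (y - x) / 2 := by rw [hm, he]; ring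
        have e2 : m - x = (y - x) / 2 := by rw [hm, he]; ring
        have := phi_strict φ hnonneg hconc hubM hx hxy
        simp only [hF, e1, e2]
        linarith
      · have hy2 : (0:ℝ) ≤ y - 2 * x := by linarith
        have e1 : y - m = y - 2 * x := by rw [hm, he]
        have e2 : m - x = x := by rw [hm, he]; ring
        have := phi_mono φ hnonneg hconc hy2 (by linarith : y - 2 * x ≤ y)
        simp only [hF, e1, e2]
        linarith
    obtain ⟨ω, hωmem, hωeq⟩ := intermediate_value_Icc' hxm hFcont ⟨hFm, hFx⟩
    refine ⟨ω, ⟨⟨hωmem.1, hωmem.2⟩, hωeq⟩, ?_⟩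
    rintro z ⟨⟨hz1, hz2⟩, hzeq⟩
    have hzF : F z = 0 := hzeq
    by_contra hne
    rcases lt_or_gt_of_ne hne with h | h
    · have := hanti z ω ⟨hz1, hz2⟩ hωmem h
      rw [hωeq, hzF] at this
      exact lt_irrefl 0 this
    · have := hanti ω z hωmem ⟨hz1, hz2⟩ h
      rw [hωeq, hzF] at this
      exact lt_irrefl 0 this
  · constructor
    · intro H
      have hadd : ∀ a b : ℝ, 0 ≤ a → 0 ≤ b → φ (a + b) = φ a + φ b := by
        intro a b ha hb
        have := H a (a + b) ha (by linarith)
        rw [sub_self, h0, add_sub_cancel_left] at this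
        linarith
      have hpow : ∀ n : ℕ, ∀ t : ℝ, 0 ≤ t → φ (2 ^ n * t) = 2 ^ n * φ t := by
        intro n
        induction n with
        | zero => intro t ht; simp
        | succ n ih =>
          intro t ht
          have e : (2:ℝ) ^ (n+1) * t = 2 ^ n * t + 2 ^ n * t := by ring
          rw [e, hadd _ _ (by positivity) (by positivity), ih t ht]
          ring
      have hclaim : ∀ s u : ℝ, 0 < s → s ≤ u → φ s * u = φ u * s := by
        intro s u hs hsu
        have hu : 0 < u := lt_of_lt_of_le hs hsu
        have hA : s * φ u ≤ φ s * u := by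
          have h' := phi_chord φ hconc h0 hs.le hsu hu
          rwa [div_mul_eq_mul_div, div_le_iff₀ hu] at h'
        obtain ⟨n, hn⟩ := pow_unbounded_of_one_lt (u / s) (one_lt_two (α := ℝ))
        have hupow : u ≤ 2 ^ n * s := by
          rw [div_lt_iff₀ hs] at hn
          linarith
        have hpos : (0:ℝ) < 2 ^ n * s := by positivity
        have h2 := phi_chord φ hconc h0 hu.le hupow hpos
        rw [hpow n s hs.le] at h2
        have h2' : u * (2 ^ n * φ s) ≤ φ u * (2 ^ n * s) := by
          rw [div_mul_eq_mul_div, div_le_iff₀ hpos] at h2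
          linarith
        have hpow2 : (0:ℝ) < 2 ^ n := by positivity
        nlinarith
      have hone : 0 < φ 1 := by
        have := phi_strict φ hnonneg hconc hubM (le_refl 0) one_pos
        rwa [h0] at this
      refine ⟨φ 1, hone, ?_⟩
      intro t ht
      rcases eq_or_lt_of_le ht with rfl | htpos
      · rw [h0, mul_zero]
      · rcases le_total t 1 with h | h
        · have := hclaim t 1 htpos h
          linarith
        · have := hclaim 1 t one_pos h
          linarith
    · rintro ⟨lam, hlam, hphi⟩ x y hx hxy
      rw [sub_self, h0, hphi x hx, hphi y (hx.trans hxy), hphi (y - x) (by linarith)]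
      ring
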